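/- arXiv:math/0603234 — 4 statements merged into one kernel-verified Lean document; each statement's English description precedes it below -/
import Mathlib

section
/- Let (R,m) be a local ring of positive dimension. The punctured spectrum Spec R \ {m} is disconnected if and only if the minimal primes of R can be partitioned into two nonempty sets p_1,…,p_m and q_1,…,q_n such that rad(p_i + q_j) = m for all pairs (i,j). -/
set_option maxHeartbeats 1000000

open PrimeSpectrum IsLocalRing Set Topology

section aux
variable (R : Type*) [CommRing R] [IsNoetherianRing R] [IsLocalRing R]


lemma aux_max_not_min (hdim : 0 < ringKrullDim R) :
    IsLocalRing.maximalIdeal R ∉ minimalPrimes R := by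
  intro hm
  have hsub : Subsingleton (PrimeSpectrum R) := by
    constructor
    intro a b
    have ha : a.asIdeal = maximalIdeal R :=
      le_antisymm (le_maximalIdeal a.2.ne_top) (hm.2 ⟨a.2, bot_le⟩ (le_maximalIdeal a.2.ne_top))
    have hb : b.asIdeal = maximalIdeal R :=
      le_antisymm (le_maximalIdeal b.2.ne_top) (hm.2 ⟨b.2, bot_le⟩ (le_maximalIdeal b.2.ne_top))
    exact PrimeSpectrum.ext (ha.trans hb.symm)
  have := Order.krullDim_nonpos_of_subsingleton (α := PrimeSpectrum R)
  rw [ringKrullDim] at hdim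
  exact absurd hdim (not_lt.mpr this)

end aux

/-- Let `(R, m)` be a Noetherian local ring of positive dimension.  The punctured
spectrum `Spec R \ {m}` is disconnected if and only if the minimal primes of `R`
can be partitioned into two nonempty sets such that `rad (p + q) = m` for every
pair `(p, q)` of primes from the two sets, respectively. -/
theorem stmt_1 (R : Type*) [CommRing R] [IsNoetherianRing R] [IsLocalRing R]
    (hdim : 0 < ringKrullDim R) :
    ¬ ConnectedSpace {q : PrimeSpectrum R // q.asIdeal ≠ IsLocalRing.maximalIdeal R} ↔
      ∃ S T : Set (Ideal R), S.Nonempty ∧ T.Nonempty ∧ Disjoint S T ∧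
        S ∪ T = minimalPrimes R ∧
        ∀ p ∈ S, ∀ q ∈ T, (p ⊔ q).radical = IsLocalRing.maximalIdeal R := by
  set m := IsLocalRing.maximalIdeal R with hm_def
  set X := {q : PrimeSpectrum R // q.asIdeal ≠ m} with hX_def
  have hmnotmin : m ∉ minimalPrimes R := aux_max_not_min R hdim
  -- every minimal prime gives a point of X
  have hmin_prime : ∀ p ∈ minimalPrimes R, p.IsPrime := fun p hp => hp.1.1
  have hmin_ne : ∀ p ∈ minimalPrimes R, p ≠ m := by
    rintro p hp rfl; exact hmnotmin hp
  -- specialization lemma in X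
  have hspec : ∀ x y : X, x.1.asIdeal ≤ y.1.asIdeal → x ⤳ y := by
    intro x y h
    rw [subtype_specializes_iff]
    exact (PrimeSpectrum.le_iff_specializes x.1 y.1).mp h
  -- existence of minimal prime below any prime
  have hexmin : ∀ x : PrimeSpectrum R, ∃ p ∈ minimalPrimes R, p ≤ x.asIdeal := by
    intro x
    have := x.2
    exact Ideal.exists_minimalPrimes_le (I := (⊥ : Ideal R)) bot_le
  constructor
  · -- forward
    intro hnc
    -- X is nonempty
    obtain ⟨p0, hp0, -⟩ := hexmin ⟨m, Ideal.IsMaximal.isPrime' m⟩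
    haveI : (p0 : Ideal R).IsPrime := hmin_prime _ hp0
    have hXne : Nonempty X := ⟨⟨⟨p0, hmin_prime _ hp0⟩, hmin_ne _ hp0⟩⟩
    have hpc : ¬ PreconnectedSpace X := fun h => hnc ⟨hXne⟩
    rw [preconnectedSpace_iff_univ] at hpc
    unfold IsPreconnected at hpc
    push_neg at hpc
    obtain ⟨u, v, hu, hv, hcov, hune, hvne, hdisj⟩ := hpc
    simp only [univ_inter, univ_subset_iff] at hcov hune hvne hdisj
    have hdisj' : ∀ x : X, x ∈ u → x ∈ v → False := fun x h1 h2 =>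
      Set.eq_empty_iff_forall_notMem.mp hdisj x ⟨h1, h2⟩
    -- u and v are closed
    have hvc : v = uᶜ := by
      apply Set.eq_of_subset_of_subset
      · exact fun x hx hxu => hdisj' x hxu hx
      · intro x hx
        rcases (hcov.ge (mem_univ x) : x ∈ u ∪ v) with h | h
        · exact absurd h hx
        · exact h
    have huclosed : IsClosed u := by rw [← compl_compl u, ← hvc]; exact hv.isClosed_compl
    have hvclosed : IsClosed v := by rw [hvc]; exact hu.isClosed_compl
    -- key claim: if x ∈ u and p is a minimal prime below x, then the point of p is in u
    have claim : ∀ (x : X) (p : Ideal R) (hp : p ∈ minimalPrimes R)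
        (hle : p ≤ x.1.asIdeal), x ∈ u →
        (⟨⟨p, hmin_prime _ hp⟩, hmin_ne _ hp⟩ : X) ∈ u := by
      intro x p hp hle hxu
      set P : X := ⟨⟨p, hmin_prime _ hp⟩, hmin_ne _ hp⟩
      rcases (hcov.ge (mem_univ P) : P ∈ u ∪ v) with h | h
      · exact h
      · exact absurd ((hspec P x hle).mem_closed hvclosed h) fun hxv => hdisj' x hxu hxv
    have claim' : ∀ (x : X) (p : Ideal R) (hp : p ∈ minimalPrimes R)
        (hle : p ≤ x.1.asIdeal), x ∈ v →
        (⟨⟨p, hmin_prime _ hp⟩, hmin_ne _ hp⟩ : X) ∈ v := by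
      intro x p hp hle hxv
      set P : X := ⟨⟨p, hmin_prime _ hp⟩, hmin_ne _ hp⟩
      rcases (hcov.ge (mem_univ P) : P ∈ u ∪ v) with h | h
      · exact absurd ((hspec P x hle).mem_closed huclosed h) fun hxu => hdisj' x hxu hxv
      · exact h
    -- define S and T
    refine ⟨{I | ∃ h : I ∈ minimalPrimes R,
        (⟨⟨I, hmin_prime _ h⟩, hmin_ne _ h⟩ : X) ∈ u},
      {I | ∃ h : I ∈ minimalPrimes R,
        (⟨⟨I, hmin_prime _ h⟩, hmin_ne _ h⟩ : X) ∈ v}, ?_, ?_, ?_, ?_, ?_⟩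
    · obtain ⟨x, hx⟩ := hune
      obtain ⟨p, hp, hple⟩ := hexmin x.1
      exact ⟨p, hp, claim x p hp hple hx⟩
    · obtain ⟨x, hx⟩ := hvne
      obtain ⟨p, hp, hple⟩ := hexmin x.1
      exact ⟨p, hp, claim' x p hp hple hx⟩
    · rw [Set.disjoint_left]
      rintro I ⟨h1, hu1⟩ ⟨h2, hv1⟩
      exact hdisj' _ hu1 hv1
    · apply Set.eq_of_subset_of_subset
      · rintro I (⟨h, -⟩ | ⟨h, -⟩) <;> exact h
      · intro I hI
        rcases (hcov.ge (mem_univ (⟨⟨I, hmin_prime _ hI⟩, hmin_ne _ hI⟩ : X)) :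
            (⟨⟨I, hmin_prime _ hI⟩, hmin_ne _ hI⟩ : X) ∈ u ∪ v) with h | h
        · exact Or.inl ⟨hI, h⟩
        · exact Or.inr ⟨hI, h⟩
    · rintro p ⟨hp, hpu⟩ q ⟨hq, hqv⟩
      apply le_antisymm
      · have h1 : p ⊔ q ≤ m := sup_le (le_maximalIdeal (hmin_prime _ hp).ne_top)
          (le_maximalIdeal (hmin_prime _ hq).ne_top)
        calc (p ⊔ q).radical ≤ m.radical := Ideal.radical_mono h1
          _ = m := (Ideal.IsMaximal.isPrime' m).radical
      · rw [Ideal.radical_eq_sInf]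
        apply le_sInf
        rintro J ⟨hJle, hJprime⟩
        by_contra hJm
        have hJne : J ≠ m := fun h => hJm (h ▸ le_refl m)
        have x_def : X := ⟨⟨J, hJprime⟩, hJne⟩
        have hxu : (⟨⟨J, hJprime⟩, hJne⟩ : X) ∈ u :=
          (hspec (⟨⟨p, hmin_prime _ hp⟩, hmin_ne _ hp⟩ : X) (⟨⟨J, hJprime⟩, hJne⟩ : X)
            (le_trans le_sup_left hJle)).mem_closed huclosed hpu
        have hxv : (⟨⟨J, hJprime⟩, hJne⟩ : X) ∈ v :=
          (hspec (⟨⟨q, hmin_prime _ hq⟩, hmin_ne _ hq⟩ : X) (⟨⟨J, hJprime⟩, hJne⟩ : X)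
            (le_trans le_sup_right hJle)).mem_closed hvclosed hqv
        exact hdisj' _ hxu hxv
  · -- backward
    rintro ⟨S, T, hSne, hTne, hST, hunion, hrad⟩ hconn
    have hSsub : S ⊆ minimalPrimes R := hunion ▸ Set.subset_union_left
    have hTsub : T ⊆ minimalPrimes R := hunion ▸ Set.subset_union_right
    have hfin : (minimalPrimes R).Finite := minimalPrimes.finite_of_isNoetherianRing R
    -- U and V
    set U : Set X := {x | ∃ p ∈ S, p ≤ x.1.asIdeal} with hU_def
    set V : Set X := {x | ∃ q ∈ T, q ≤ x.1.asIdeal} with hV_def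
    have hclosed : ∀ (W : Set (Ideal R)), W ⊆ minimalPrimes R →
        IsClosed {x : X | ∃ p ∈ W, p ≤ x.1.asIdeal} := by
      intro W hW
      have hWfin : W.Finite := hfin.subset hW
      have : {x : X | ∃ p ∈ W, p ≤ x.1.asIdeal} =
          Subtype.val ⁻¹' (zeroLocus (R := R) ↑(hWfin.toFinset.inf id)) := by
        ext x
        simp only [mem_setOf_eq, mem_preimage, mem_zeroLocus, SetLike.coe_subset_coe]
        rw [Ideal.IsPrime.inf_le' x.1.2]
        simp [Set.Finite.mem_toFinset]
      rw [this]
      exact (isClosed_zeroLocus _).preimage continuous_subtype_val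
    have hUclosed : IsClosed U := hclosed S hSsub
    have hVclosed : IsClosed V := hclosed T hTsub
    have hcov : U ∪ V = univ := by
      apply Set.eq_univ_of_forall
      intro x
      obtain ⟨p, hp, hple⟩ := hexmin x.1
      have hp' : p ∈ S ∪ T := by rw [hunion]; exact hp
      rcases hp' with h | h
      · exact Or.inl ⟨p, h, hple⟩
      · exact Or.inr ⟨p, h, hple⟩
    have hdisj : U ∩ V = ∅ := by
      rw [Set.eq_empty_iff_forall_notMem]
      rintro x ⟨⟨p, hp, hple⟩, ⟨q, hq, hqle⟩⟩
      have h2 : (p ⊔ q).radical ≤ x.1.asIdeal :=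
        calc (p ⊔ q).radical ≤ x.1.asIdeal.radical :=
            Ideal.radical_mono (sup_le hple hqle)
          _ = x.1.asIdeal := x.1.2.radical
      have h1 : m ≤ x.1.asIdeal := (hrad p hp q hq).symm.le.trans h2
      exact x.2 (le_antisymm (le_maximalIdeal x.1.2.ne_top) h1)
    -- U nonempty, V nonempty
    obtain ⟨p, hpS⟩ := hSne
    obtain ⟨q, hqT⟩ := hTne
    have hpmin := hSsub hpS
    have hqmin := hTsub hqT
    set xp : X := ⟨⟨p, hmin_prime _ hpmin⟩, hmin_ne _ hpmin⟩
    set xq : X := ⟨⟨q, hmin_prime _ hqmin⟩, hmin_ne _ hqmin⟩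
    have hxpU : xp ∈ U := ⟨p, hpS, le_refl p⟩
    have hxqV : xq ∈ V := ⟨q, hqT, le_refl q⟩
    have hxqU : xq ∉ U := by
      intro h
      have : xq ∈ U ∩ V := ⟨h, hxqV⟩
      rw [hdisj] at this; exact this
    -- U is clopen
    have hUV : V = Uᶜ := by
      apply Set.eq_of_subset_of_subset
      · intro x hx hxu
        have : x ∈ U ∩ V := ⟨hxu, hx⟩
        rw [hdisj] at this; exact this
      · intro x hx
        rcases (hcov.ge (mem_univ x) : x ∈ U ∪ V) with h | h
        · exact absurd h hx
        · exact h
    have hUopen : IsOpen U := by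
      rw [← isClosed_compl_iff, ← hUV]; exact hVclosed
    haveI := hconn
    rcases isClopen_iff.mp ⟨hUclosed, hUopen⟩ with h | h
    · rw [h] at hxpU; exact hxpU
    · rw [h] at hxqU; exact hxqU (mem_univ xq)
end

section
/- Let A be a local domain and P_1,…,P_n pairwise incomparable prime ideals of A with n ≥ 2. Set R = A/(P_1 ∩ ⋯ ∩ P_n). If the punctured spectrum of R is connected, then there exists an index i such that the punctured spectrum of A/(P_1 ∩ ⋯ ∩ \hat{P_i} ∩ ⋯ ∩ P_n) (omitting P_i) is also connected. -/
/-- The punctured spectrum of the quotient `A ⧸ I` of a local ring `(A, M)` is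
connected: here the closed point of `Spec (A ⧸ I)` is the image `M.map (mk I)`
of the maximal ideal of `A`. -/
def PuncturedSpecQuotientConnected {A : Type*} [CommRing A] [IsLocalRing A]
    (I : Ideal A) : Prop :=
  ConnectedSpace {q : PrimeSpectrum (A ⧸ I) //
    q.asIdeal ≠ (IsLocalRing.maximalIdeal A).map (Ideal.Quotient.mk I)}

open PrimeSpectrum IsLocalRing Relation

section Aux

variable {A : Type*} [CommRing A] [IsLocalRing A]

lemma image_comap_quotient (I : Ideal A) (hI : I ≤ maximalIdeal A) :
    (PrimeSpectrum.comap (Ideal.Quotient.mk I)) ''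
      {q | q.asIdeal ≠ (maximalIdeal A).map (Ideal.Quotient.mk I)}
    = zeroLocus (I : Set A) \ {closedPoint A} := by
  have hker : RingHom.ker (Ideal.Quotient.mk I) = I := Ideal.mk_ker
  have hsurj : Function.Surjective (Ideal.Quotient.mk I) := Ideal.Quotient.mk_surjective
  ext x
  constructor
  · rintro ⟨q, hq, rfl⟩
    refine ⟨?_, ?_⟩
    · rw [mem_zeroLocus]
      intro a ha
      show a ∈ Ideal.comap _ q.asIdeal
      rw [Ideal.mem_comap]
      rw [Ideal.Quotient.eq_zero_iff_mem.mpr ha]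
      exact q.asIdeal.zero_mem
    · intro hx
      apply hq
      have hx' : Ideal.comap (Ideal.Quotient.mk I) q.asIdeal = maximalIdeal A :=
        congrArg PrimeSpectrum.asIdeal hx
      calc q.asIdeal
          = Ideal.map (Ideal.Quotient.mk I) (Ideal.comap (Ideal.Quotient.mk I) q.asIdeal) :=
            (Ideal.map_comap_of_surjective _ hsurj _).symm
        _ = Ideal.map (Ideal.Quotient.mk I) (maximalIdeal A) := by rw [hx']
  · rintro ⟨hx1, hx2⟩
    rw [mem_zeroLocus] at hx1
    have hIx : I ≤ x.asIdeal := hx1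
    refine ⟨⟨Ideal.map (Ideal.Quotient.mk I) x.asIdeal,
      Ideal.map_isPrime_of_surjective hsurj (by rwa [hker])⟩, ?_, ?_⟩
    · intro h
      apply hx2
      have h' : Ideal.map (Ideal.Quotient.mk I) x.asIdeal
          = Ideal.map (Ideal.Quotient.mk I) (maximalIdeal A) := h
      have h2 := congrArg (Ideal.comap (Ideal.Quotient.mk I)) h'
      rw [Ideal.comap_map_of_surjective _ hsurj, Ideal.comap_map_of_surjective _ hsurj,
        ← RingHom.ker_eq_comap_bot, hker, sup_eq_left.mpr hIx, sup_eq_left.mpr hI] at h2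
      exact PrimeSpectrum.ext h2
    · apply PrimeSpectrum.ext
      show Ideal.comap _ (Ideal.map _ x.asIdeal) = x.asIdeal
      rw [Ideal.comap_map_of_surjective _ hsurj, ← RingHom.ker_eq_comap_bot, hker,
        sup_eq_left.mpr hIx]

lemma puncturedSpecQuotientConnected_iff (I : Ideal A) (hI : I ≤ maximalIdeal A) :
    PuncturedSpecQuotientConnected I ↔
      IsConnected (zeroLocus (I : Set A) \ {closedPoint A}) := by
  have himg := image_comap_quotient I hI
  have hind : Topology.IsInducing (PrimeSpectrum.comap (Ideal.Quotient.mk I)) :=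
    PrimeSpectrum.comap_isInducing_of_surjective _ _ Ideal.Quotient.mk_surjective
  constructor
  · intro h
    have h' : IsConnected
        {q : PrimeSpectrum (A ⧸ I) |
          q.asIdeal ≠ (maximalIdeal A).map (Ideal.Quotient.mk I)} :=
      isConnected_iff_connectedSpace.mpr h
    rw [← himg]
    exact ⟨h'.nonempty.image _, hind.isPreconnected_image.mpr h'.isPreconnected⟩
  · intro h
    rw [← himg] at h
    have h' : IsConnected
        {q : PrimeSpectrum (A ⧸ I) |
          q.asIdeal ≠ (maximalIdeal A).map (Ideal.Quotient.mk I)} :=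
      ⟨h.nonempty.of_image, hind.isPreconnected_image.mp h.isPreconnected⟩
    exact isConnected_iff_connectedSpace.mp h'

lemma walk_reflTransGen {V : Type*} {G : SimpleGraph V} {v : V} {a b : V}
    (p : G.Walk a b) (hv : v ∉ p.support) :
    ReflTransGen (fun x y => x ≠ v ∧ y ≠ v ∧ G.Adj x y) a b := by
  induction p with
  | nil => exact ReflTransGen.refl
  | @cons x y z h q ih =>
    rw [SimpleGraph.Walk.support_cons, List.mem_cons] at hv
    push_neg at hv
    obtain ⟨hxv, hq⟩ := hv
    have hyv : y ≠ v := fun h' => hq (h' ▸ q.start_mem_support)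
    exact ReflTransGen.head ⟨Ne.symm hxv, hyv, h⟩ (ih hq)

lemma exists_noncut {V : Type*} [Fintype V] [DecidableEq V] (G : SimpleGraph V)
    (hG : ∀ a b, G.Reachable a b) (u0 u1 : V) (hne : u0 ≠ u1) :
    ∃ v : V, ∀ a b : V, a ≠ v → b ≠ v →
      ReflTransGen (fun x y => x ≠ v ∧ y ≠ v ∧ G.Adj x y) a b := by
  obtain ⟨v, -, hv⟩ := Finset.exists_max_image Finset.univ (G.dist u0)
    ⟨u0, Finset.mem_univ _⟩
  refine ⟨v, ?_⟩
  have main : ∀ w, w ≠ v →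
      ReflTransGen (fun x y => x ≠ v ∧ y ≠ v ∧ G.Adj x y) u0 w := by
    intro w hw
    obtain ⟨p, hp⟩ := (hG u0 w).exists_walk_length_eq_dist
    by_cases hvp : v ∈ p.support
    · exfalso
      have h1 : G.dist u0 v ≤ (p.takeUntil v hvp).length := SimpleGraph.dist_le _
      have h2 : G.dist v w ≤ (p.dropUntil v hvp).length := SimpleGraph.dist_le _
      have h3 : (p.takeUntil v hvp).length + (p.dropUntil v hvp).length = p.length := by
        rw [← SimpleGraph.Walk.length_append, SimpleGraph.Walk.take_spec]
      have h4 : G.dist u0 w ≤ G.dist u0 v := hv w (Finset.mem_univ _)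
      have h5 : G.dist v w = 0 := by omega
      exact hw (((hG v w).dist_eq_zero_iff.mp h5).symm)
    · exact walk_reflTransGen p hvp
  intro a b ha hb
  have hsymm : Symmetric (fun x y => x ≠ v ∧ y ≠ v ∧ G.Adj x y) :=
    fun x y ⟨h1, h2, h3⟩ => ⟨h2, h1, h3.symm⟩
  haveI : Std.Symm (fun x y => x ≠ v ∧ y ≠ v ∧ G.Adj x y) := ⟨hsymm⟩
  exact (Std.Symm.symm _ _ (main a ha)).trans (main b hb)

end Aux

/-- Let `A` be a Noetherian local domain and `P 0, …, P (n-1)` pairwise incomparable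
prime ideals of `A`, with `n ≥ 2`.  If the punctured spectrum of
`A ⧸ (P 0 ∩ ⋯ ∩ P (n-1))` is connected, then there is an index `i` such that the
punctured spectrum of the quotient by the intersection of the other `P j`'s
(omitting `P i`) is also connected. -/
theorem stmt_2 (A : Type*) [CommRing A] [IsNoetherianRing A] [IsLocalRing A]
    [IsDomain A] (n : ℕ) (hn : 2 ≤ n) (P : Fin n → Ideal A)
    (hprime : ∀ i, (P i).IsPrime)
    (hincomp : ∀ i j, i ≠ j → ¬ P i ≤ P j)
    (hconn : PuncturedSpecQuotientConnected (⨅ i, P i)) :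
    ∃ i : Fin n, PuncturedSpecQuotientConnected (⨅ j ∈ ({i}ᶜ : Set (Fin n)), P j) := by
  classical
  set m := IsLocalRing.closedPoint A with hm
  set a : Fin n := ⟨0, by omega⟩ with hadef
  set b : Fin n := ⟨1, by omega⟩ with hbdef
  have hab0 : a ≠ b := by
    simp [hadef, hbdef, Fin.ext_iff]
  haveI : Nontrivial (Fin n) := ⟨a, b, hab0⟩
  have hPM : ∀ j, P j ≠ maximalIdeal A := by
    intro j hj
    obtain ⟨i, hi⟩ := exists_ne j
    exact hincomp i j hi (hj ▸ IsLocalRing.le_maximalIdeal (hprime i).ne_top)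
  set C : Fin n → Set (PrimeSpectrum A) :=
    fun j => zeroLocus (P j : Set A) \ {m} with hC
  have hmem : ∀ (j) (x : PrimeSpectrum A), x ∈ C j ↔ P j ≤ x.asIdeal ∧ x ≠ m := by
    intro j x
    simp [hC, mem_zeroLocus, SetLike.coe_subset_coe]
  have hCne : ∀ j, (C j).Nonempty := by
    intro j
    refine ⟨⟨P j, hprime j⟩, (hmem _ _).mpr ⟨le_rfl, ?_⟩⟩
    intro h
    exact hPM j (congrArg PrimeSpectrum.asIdeal h)
  have hCpre : ∀ j, IsPreconnected (C j) := by
    intro j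
    apply IsPreirreducible.isPreconnected
    rintro u v hu hv ⟨x, hxC, hxu⟩ ⟨y, hyC, hyv⟩
    set p : PrimeSpectrum A := ⟨P j, hprime j⟩ with hp
    have hgen : ∀ z ∈ C j, z ∈ closure ({p} : Set (PrimeSpectrum A)) := by
      intro z hz
      rw [PrimeSpectrum.closure_singleton, mem_zeroLocus]
      exact ((hmem j z).mp hz).1
    have hpu : p ∈ u := by
      rcases mem_closure_iff.mp (hgen x hxC) u hu hxu with ⟨w, hw1, hw2⟩
      rw [Set.mem_singleton_iff] at hw2
      exact hw2 ▸ hw1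
    have hpv : p ∈ v := by
      rcases mem_closure_iff.mp (hgen y hyC) v hv hyv with ⟨w, hw1, hw2⟩
      rw [Set.mem_singleton_iff] at hw2
      exact hw2 ▸ hw1
    refine ⟨p, (hmem _ _).mpr ⟨le_rfl, ?_⟩, hpu, hpv⟩
    intro h
    exact hPM j (congrArg PrimeSpectrum.asIdeal h)
  -- decomposition of punctured zero loci as unions
  have hZ : ∀ s : Set (Fin n),
      zeroLocus ((⨅ j ∈ s, P j : Ideal A) : Set A) \ {m} = ⋃ j ∈ s, C j := by
    intro s
    have hfs : (⨅ j ∈ s, P j : Ideal A) = (s.toFinite.toFinset).inf P := by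
      rw [Finset.inf_eq_iInf]
      exact iInf_congr fun j => iInf_congr_Prop (Set.Finite.mem_toFinset _).symm (fun _ => rfl)
    ext x
    simp only [Set.mem_diff, mem_zeroLocus, SetLike.coe_subset_coe, Set.mem_iUnion,
      Set.mem_singleton_iff]
    constructor
    · rintro ⟨hle, hxm⟩
      rw [hfs] at hle
      obtain ⟨j, hjs, hj⟩ := (x.isPrime.inf_le').mp hle
      rw [Set.Finite.mem_toFinset] at hjs
      exact ⟨j, hjs, (hmem _ _).mpr ⟨hj, hxm⟩⟩
    · rintro ⟨j, hjs, hj⟩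
      obtain ⟨hle, hxm⟩ := (hmem _ _).mp hj
      exact ⟨le_trans (iInf₂_le j hjs) hle, hxm⟩
  have hZuniv : zeroLocus (((⨅ i, P i : Ideal A)) : Set A) \ {m} = ⋃ j, C j := by
    have : (⨅ i, P i : Ideal A) = ⨅ j ∈ (Set.univ : Set (Fin n)), P j := by simp
    rw [this, hZ]
    simp
  have hconn' : IsConnected (⋃ j, C j) := by
    rw [← hZuniv]
    exact (puncturedSpecQuotientConnected_iff _
      (le_trans (iInf_le _ a) (IsLocalRing.le_maximalIdeal (hprime a).ne_top))).mp hconn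
  -- the incidence graph
  set G : SimpleGraph (Fin n) :=
    { Adj := fun j k => j ≠ k ∧ (C j ∩ C k).Nonempty
      symm := ⟨fun j k ⟨h1, h2⟩ => ⟨h1.symm, by rwa [Set.inter_comm]⟩⟩
      loopless := ⟨fun j h => h.1 rfl⟩ } with hG
  have hreach : ∀ j k, G.Reachable j k := by
    intro j k
    by_contra hk
    set t : Set (Fin n) := {l | G.Reachable j l} with ht
    have hF1 : IsClosed (⋃ l ∈ t, zeroLocus (P l : Set A)) :=
      Set.Finite.isClosed_biUnion t.toFinite (fun _ _ => isClosed_zeroLocus _)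
    have hF2 : IsClosed (⋃ l ∈ tᶜ, zeroLocus (P l : Set A)) :=
      Set.Finite.isClosed_biUnion (tᶜ).toFinite (fun _ _ => isClosed_zeroLocus _)
    have hsub : (⋃ j, C j) ⊆
        (⋃ l ∈ t, zeroLocus (P l : Set A)) ∪ (⋃ l ∈ tᶜ, zeroLocus (P l : Set A)) := by
      intro x hx
      obtain ⟨l, hl⟩ := Set.mem_iUnion.mp hx
      by_cases hlt : l ∈ t
      · exact Or.inl (Set.mem_biUnion hlt hl.1)
      · exact Or.inr (Set.mem_biUnion hlt hl.1)
    have h1ne : ((⋃ j, C j) ∩ ⋃ l ∈ t, zeroLocus (P l : Set A)).Nonempty := by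
      obtain ⟨x, hx⟩ := hCne j
      exact ⟨x, Set.mem_iUnion.mpr ⟨j, hx⟩,
        Set.mem_biUnion (by exact SimpleGraph.Reachable.refl j) hx.1⟩
    have h2ne : ((⋃ j, C j) ∩ ⋃ l ∈ tᶜ, zeroLocus (P l : Set A)).Nonempty := by
      obtain ⟨x, hx⟩ := hCne k
      exact ⟨x, Set.mem_iUnion.mpr ⟨k, hx⟩, Set.mem_biUnion hk hx.1⟩
    obtain ⟨x, hxU, hx12⟩ := (isPreconnected_closed_iff.mp hconn'.isPreconnected)
      _ _ hF1 hF2 hsub h1ne h2ne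
    obtain ⟨hx1, hx2⟩ := hx12
    obtain ⟨c, hct, hxc⟩ := Set.mem_iUnion₂.mp hx1
    obtain ⟨d, hdt, hxd⟩ := Set.mem_iUnion₂.mp hx2
    have hxm : x ≠ m := by
      obtain ⟨l, hl⟩ := Set.mem_iUnion.mp hxU
      exact hl.2
    have hcd : c ≠ d := fun h => hdt (h ▸ hct)
    have hadj : G.Adj c d := ⟨hcd, ⟨x, ⟨hxc, hxm⟩, ⟨hxd, hxm⟩⟩⟩
    exact hdt (hct.trans hadj.reachable)
  obtain ⟨v, hvcut⟩ := exists_noncut G hreach a b hab0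
  refine ⟨v, ?_⟩
  -- the intersection omitting `v` is contained in the maximal ideal
  obtain ⟨w, hw⟩ := exists_ne v
  have hJle : (⨅ j ∈ ({v}ᶜ : Set (Fin n)), P j) ≤ maximalIdeal A :=
    le_trans (iInf₂_le w (by simpa using hw))
      (IsLocalRing.le_maximalIdeal (hprime w).ne_top)
  rw [puncturedSpecQuotientConnected_iff _ hJle, hZ ({v}ᶜ : Set (Fin n))]
  apply IsConnected.biUnion_of_reflTransGen
  · exact ⟨w, by simpa using hw⟩
  · exact fun j _ => ⟨hCne j, hCpre j⟩
  · intro i hi j hj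
    have hi' : i ≠ v := by simpa using hi
    have hj' : j ≠ v := by simpa using hj
    refine Relation.ReflTransGen.mono ?_ _ _ (hvcut i j hi' hj')
    rintro x y ⟨hx, hy, hadj⟩
    exact ⟨hadj.2, by simpa using hx⟩
end

section
/- Let (R,m) be a Noetherian local ring of positive dimension containing a field of characteristic p > 0 such that H^1_m(R) is F-torsion. Suppose a and b are ideals of R with a ∩ b = 0 and a + b m-primary. Then a or b is m-primary. Consequently, the punctured spectrum of R is connected. -/
open IsLocalRing Ideal Set

private lemma unit_cancel {R : Type*} [CommRing R] {v : Rˣ} {w : R}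
    (h : ↑v * w ∈ nilradical R) : w ∈ nilradical R := by
  have h2 : w = ↑v⁻¹ * (↑v * w) := by rw [← mul_assoc, Units.inv_mul, one_mul]
  rw [h2]
  exact Ideal.mul_mem_left _ _ h

private lemma pow_stable {R : Type*} [CommRing R] {z : R} {k n : ℕ}
    (h : z ^ k = 0) (hkn : k ≤ n) : z ^ n = 0 := by
  obtain ⟨m, rfl⟩ := Nat.exists_eq_add_of_le hkn
  rw [pow_add, h, zero_mul]

/-- If `x^Q = A^Q + B^Q`, `A^Q * B^Q = 0`, and `(x^Q)^t * (A^Q)^q` is in the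
nilradical (with `q ≥ 1`), then `A` is nilpotent. -/
private lemma nilp_helper {R : Type*} [CommRing R] {A B x : R} {Q t q : ℕ}
    (hq : q ≠ 0) (hAB : A ^ Q * B ^ Q = 0) (hx : x ^ Q = A ^ Q + B ^ Q)
    (hv : (x ^ Q) ^ t * (A ^ Q) ^ q ∈ nilradical R) : IsNilpotent A := by
  obtain ⟨q', rfl⟩ : ∃ q', q = q' + 1 := ⟨q - 1, (Nat.succ_pred_eq_of_pos (Nat.pos_of_ne_zero hq)).symm⟩
  set α := A ^ Q with hα
  set β := B ^ Q with hβ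
  obtain ⟨s, hs⟩ := sub_dvd_pow_sub_pow (α + β) α t
  have key : (x ^ Q) ^ t * α ^ (q' + 1) = α ^ (t + (q' + 1)) := by
    rw [hx]
    have h1 : (α + β) ^ t = α ^ t + β * s := by linear_combination hs
    rw [h1]
    linear_combination (s * α ^ q') * hAB
  rw [key] at hv
  obtain ⟨k, hk⟩ := mem_nilradical.mp hv
  refine ⟨Q * ((t + (q' + 1)) * k), ?_⟩
  rw [hα] at hk
  rw [pow_mul, pow_mul]
  exact hk

/-- From a generating family `x i = A i + B i` with all `A i` nilpotent and all
`B i ∈ b`, the radical of `b` is the maximal ideal. -/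
private lemma radical_eq_of_nilp {R : Type*} [CommRing R] [IsLocalRing R]
    (p : ℕ) [Fact p.Prime] [CharP R p] {d : ℕ} {x A B : Fin d → R} {b : Ideal R}
    (hxr : (Ideal.span (Set.range x)).radical = maximalIdeal R)
    (hd : ∀ i, A i + B i = x i) (hBb : ∀ i, B i ∈ b) (hA : ∀ i, IsNilpotent (A i))
    (hble : b.radical ≤ maximalIdeal R) : b.radical = maximalIdeal R := by
  haveI : ExpChar R p := .prime Fact.out
  refine le_antisymm hble ?_
  rw [← hxr]
  have h1 : Ideal.span (Set.range x) ≤ b.radical := by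
    rw [Ideal.span_le]
    rintro _ ⟨i, rfl⟩
    obtain ⟨k, hk⟩ := hA i
    refine Ideal.mem_radical_iff.mpr ⟨p ^ k, ?_⟩
    have hx : x i ^ p ^ k = A i ^ p ^ k + B i ^ p ^ k := by
      rw [← hd i, add_pow_char_pow]
    have hA0 : A i ^ p ^ k = 0 :=
      pow_stable hk (le_of_lt (Nat.lt_pow_self (n := k) (Fact.out : p.Prime).one_lt))
    rw [hx, hA0, zero_add]
    exact Ideal.pow_mem_of_mem b (hBb i) _ (pow_pos (Fact.out : p.Prime).pos k)
  calc (Ideal.span (Set.range x)).radical ≤ b.radical.radical := Ideal.radical_mono h1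
    _ = b.radical := Ideal.radical_idem b

/-- The key algebraic statement: if `a ⊓ b` is contained in the nilradical and
`a ⊔ b` is `m`-primary, then `a` or `b` is `m`-primary. -/
private lemma key_lemma (R : Type*) [CommRing R] [IsNoetherianRing R] [IsLocalRing R]
    (p : ℕ) [Fact p.Prime] [CharP R p]
    (hFtor : ∀ (d : ℕ) (x y : Fin d → R),
      (Ideal.span (Set.range x)).radical = IsLocalRing.maximalIdeal R →
      (∀ i j, ∃ t : ℕ, (x i * x j) ^ t * (y i * x j - y j * x i) = 0) →
      ∃ (e : ℕ) (r : R), ∀ i, ∃ t : ℕ,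
        x i ^ t * (y i ^ p ^ e - r * x i ^ p ^ e) = 0)
    (a b : Ideal R) (hab : a ⊓ b ≤ nilradical R)
    (hm : (a ⊔ b).radical = maximalIdeal R) :
    a.radical = maximalIdeal R ∨ b.radical = maximalIdeal R := by
  haveI : ExpChar R p := .prime Fact.out
  have hp1 : 1 < p := (Fact.out : p.Prime).one_lt
  -- generators of the maximal ideal
  obtain ⟨d, z, hz⟩ := Submodule.fg_iff_exists_fin_generating_family.mp
    (IsNoetherian.noetherian (maximalIdeal R))
  have hzm : ∀ i, z i ∈ maximalIdeal R := fun i => hz ▸ Submodule.subset_span ⟨i, rfl⟩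
  have hzr : ∀ i, ∃ n : ℕ, z i ^ n ∈ a ⊔ b := fun i => by
    have h' : z i ∈ (a ⊔ b).radical := by rw [hm]; exact hzm i
    exact Ideal.mem_radical_iff.mp h'
  choose n hn using hzr
  set x : Fin d → R := fun i => z i ^ (n i + 1) with hxdef
  have hxab : ∀ i, x i ∈ a ⊔ b := fun i => by
    rw [hxdef]; simpa [pow_succ] using Ideal.mul_mem_right (z i) _ (hn i)
  have hxm : (Ideal.span (Set.range x)).radical = maximalIdeal R := by
    apply le_antisymm
    · have : Ideal.span (Set.range x) ≤ maximalIdeal R := by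
        rw [Ideal.span_le]; rintro _ ⟨i, rfl⟩
        exact Ideal.pow_mem_of_mem _ (hzm i) _ (Nat.succ_pos _)
      calc (Ideal.span (Set.range x)).radical ≤ (maximalIdeal R).radical :=
            Ideal.radical_mono this
        _ = maximalIdeal R := ((maximalIdeal.isMaximal R).isPrime).radical
    · rw [← hz]
      refine le_trans (Submodule.span_le.mpr ?_) le_rfl
      rintro _ ⟨i, rfl⟩
      exact Ideal.mem_radical_iff.mpr ⟨n i + 1, Ideal.subset_span ⟨i, rfl⟩⟩
  -- decompose x i = A i + B i
  have hdecomp : ∀ i, ∃ u ∈ a, ∃ v ∈ b, u + v = x i := fun i =>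
    Submodule.mem_sup.mp (hxab i)
  choose A hA B hB hABsum using hdecomp
  -- nilpotency of cross terms
  have hz1 : ∀ i j : Fin d, ∃ k : ℕ, (A i * B j - A j * B i) ^ k = 0 := by
    intro i j
    refine mem_nilradical.mp (hab (Submodule.mem_inf.mpr ⟨?_, ?_⟩))
    · exact Submodule.sub_mem _ (Ideal.mul_mem_right _ _ (hA i)) (Ideal.mul_mem_right _ _ (hA j))
    · exact Submodule.sub_mem _ (Ideal.mul_mem_left _ _ (hB j)) (Ideal.mul_mem_left _ _ (hB i))
  have hz2 : ∀ i : Fin d, ∃ k : ℕ, (A i * B i) ^ k = 0 := by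
    intro i
    refine mem_nilradical.mp (hab (Submodule.mem_inf.mpr ⟨?_, ?_⟩))
    · exact Ideal.mul_mem_right _ _ (hA i)
    · exact Ideal.mul_mem_left _ _ (hB i)
  choose k1 hk1 using hz1
  choose k2 hk2 using hz2
  set K : ℕ := (Finset.univ.sup fun ij : Fin d × Fin d => k1 ij.1 ij.2) +
      Finset.univ.sup k2 with hK
  set Q : ℕ := p ^ K with hQ
  have hQpos : 0 < Q := pow_pos (Fact.out : p.Prime).pos K
  have hKQ : K ≤ Q := le_of_lt (Nat.lt_pow_self (n := K) hp1)
  have hQ1 : ∀ i j, (A i * B j - A j * B i) ^ Q = 0 := fun i j =>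
    pow_stable (hk1 i j)
      (le_trans (le_trans (Finset.le_sup (f := fun ij : Fin d × Fin d => k1 ij.1 ij.2) (Finset.mem_univ (i, j))) (Nat.le_add_right _ _)) hKQ)
  have hQ2 : ∀ i, (A i * B i) ^ Q = 0 := fun i =>
    pow_stable (hk2 i)
      (le_trans (le_trans (Finset.le_sup (f := k2) (Finset.mem_univ i)) (Nat.le_add_left _ _)) hKQ)
  -- the Frobenius-power families
  set X : Fin d → R := fun i => x i ^ Q with hXdef
  set Y : Fin d → R := fun i => A i ^ Q with hYdef
  have hXm : (Ideal.span (Set.range X)).radical = maximalIdeal R := by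
    apply le_antisymm
    · have h1 : Ideal.span (Set.range X) ≤ Ideal.span (Set.range x) := by
        rw [Ideal.span_le]; rintro _ ⟨i, rfl⟩
        exact Ideal.pow_mem_of_mem _ (Ideal.subset_span (Set.mem_range_self i)) _ hQpos
      calc (Ideal.span (Set.range X)).radical ≤ (Ideal.span (Set.range x)).radical :=
            Ideal.radical_mono h1
        _ = maximalIdeal R := hxm
    · rw [← hxm]
      have h2 : Ideal.span (Set.range x) ≤ (Ideal.span (Set.range X)).radical := by
        rw [Ideal.span_le]; rintro _ ⟨i, rfl⟩
        exact Ideal.mem_radical_iff.mpr ⟨Q, Ideal.subset_span ⟨i, rfl⟩⟩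
      calc (Ideal.span (Set.range x)).radical ≤ (Ideal.span (Set.range X)).radical.radical :=
            Ideal.radical_mono h2
        _ = (Ideal.span (Set.range X)).radical := Ideal.radical_idem _
  have hfrob : ∀ i, x i ^ Q = A i ^ Q + B i ^ Q := fun i => by
    rw [← hABsum i, hQ, add_pow_char_pow]
  have hcocycle : ∀ i j, ∃ t : ℕ, (X i * X j) ^ t * (Y i * X j - Y j * X i) = 0 := by
    intro i j
    refine ⟨0, ?_⟩
    rw [pow_zero, one_mul, hXdef, hYdef]
    have h1 : A i ^ Q * x j ^ Q - A j ^ Q * x i ^ Q = (A i * x j - A j * x i) ^ Q := by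
      rw [hQ, sub_pow_char_pow, mul_pow, mul_pow]
    have h2 : A i * x j - A j * x i = A i * B j - A j * B i := by
      rw [← hABsum i, ← hABsum j]; ring
    simp only []
    rw [h1, h2, hQ1 i j]
  obtain ⟨e, r, hFr⟩ := hFtor d X Y hXm hcocycle
  have hqe : p ^ e ≠ 0 := (pow_pos (Fact.out : p.Prime).pos e).ne'
  -- common consequence: for each i, x^{Qt}·(1-r)·(A^Q)^{pe} = x^{Qt}·r·(B^Q)^{pe} ∈ nilradical
  have hmain : ∀ i, ∃ t : ℕ,
      (x i ^ Q) ^ t * ((1 - r) * (A i ^ Q) ^ p ^ e) = (x i ^ Q) ^ t * (r * (B i ^ Q) ^ p ^ e) ∧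
      (x i ^ Q) ^ t * ((1 - r) * (A i ^ Q) ^ p ^ e) ∈ nilradical R := by
    intro i
    obtain ⟨t, ht⟩ := hFr i
    simp only [hXdef, hYdef] at ht
    have hXq : (x i ^ Q) ^ p ^ e = (A i ^ Q) ^ p ^ e + (B i ^ Q) ^ p ^ e := by
      rw [hfrob i, add_pow_char_pow]
    have heq : (x i ^ Q) ^ t * ((1 - r) * (A i ^ Q) ^ p ^ e) =
        (x i ^ Q) ^ t * (r * (B i ^ Q) ^ p ^ e) := by
      linear_combination ht + r * (x i ^ Q) ^ t * hXq
    refine ⟨t, heq, hab (Submodule.mem_inf.mpr ⟨?_, ?_⟩)⟩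
    · exact Ideal.mul_mem_left _ _ (Ideal.mul_mem_left _ _
        (Ideal.pow_mem_of_mem a (Ideal.pow_mem_of_mem a (hA i) _ hQpos) _
          (pow_pos (Fact.out : p.Prime).pos e)))
    · rw [heq]
      exact Ideal.mul_mem_left _ _ (Ideal.mul_mem_left _ _
        (Ideal.pow_mem_of_mem b (Ideal.pow_mem_of_mem b (hB i) _ hQpos) _
          (pow_pos (Fact.out : p.Prime).pos e)))
  by_cases hr : r ∈ maximalIdeal R
  · -- 1 - r is a unit; all A i are nilpotent; b is m-primary
    right
    have hu : IsUnit (1 - r) := isUnit_one_sub_self_of_mem_nonunits r ((mem_maximalIdeal r).mp hr)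
    obtain ⟨v, hv⟩ := hu
    have hAnil : ∀ i, IsNilpotent (A i) := by
      intro i
      obtain ⟨t, heq, hmem⟩ := hmain i
      have hv' : (x i ^ Q) ^ t * (A i ^ Q) ^ p ^ e ∈ nilradical R := by
        refine unit_cancel (v := v) ?_
        have h5 : ↑v * ((x i ^ Q) ^ t * (A i ^ Q) ^ p ^ e) =
            (x i ^ Q) ^ t * ((1 - r) * (A i ^ Q) ^ p ^ e) := by rw [hv]; ring
        rw [h5]
        exact hmem
      exact nilp_helper hqe (by rw [← mul_pow]; exact hQ2 i) (hfrob i) hv'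
    exact radical_eq_of_nilp p hxm (fun i => hABsum i) hB hAnil
      (hm ▸ Ideal.radical_mono le_sup_right)
  · -- r is a unit; all B i are nilpotent; a is m-primary
    left
    have hu : IsUnit r := notMem_maximalIdeal.mp hr
    obtain ⟨v, hv⟩ := hu
    have hBnil : ∀ i, IsNilpotent (B i) := by
      intro i
      obtain ⟨t, heq, hmem⟩ := hmain i
      rw [heq] at hmem
      have hv' : (x i ^ Q) ^ t * (B i ^ Q) ^ p ^ e ∈ nilradical R := by
        refine unit_cancel (v := v) ?_
        have h5 : ↑v * ((x i ^ Q) ^ t * (B i ^ Q) ^ p ^ e) =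
            (x i ^ Q) ^ t * (r * (B i ^ Q) ^ p ^ e) := by rw [hv]; ring
        rw [h5]
        exact hmem
      have hfrob' : x i ^ Q = B i ^ Q + A i ^ Q := by rw [hfrob i, add_comm]
      exact nilp_helper hqe (by rw [← mul_pow, mul_comm (B i)]; exact hQ2 i) hfrob' hv'
    exact radical_eq_of_nilp p hxm (fun i => by rw [add_comm]; exact hABsum i) hA hBnil
      (hm ▸ Ideal.radical_mono le_sup_left)

/-- Let `(R, m)` be a Noetherian local ring of positive dimension containing a
field of characteristic `p > 0` such that `H¹_m(R)` is `F`-torsion.  (In Čech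
terms: for every family of generators `x` of an `m`-primary ideal and every Čech
1-cocycle `(y i / x i)`, some Frobenius power of the corresponding class of
`H¹_m(R)` is zero, i.e. there are `e` and `r ∈ R` with `(y i / x i)^(pᵉ) = r` in
`R_{x i}` for all `i`.)  If `a`, `b` are ideals of `R` with `a ∩ b = 0` and
`a + b` being `m`-primary, then `a` or `b` is `m`-primary.  Consequently, the
punctured spectrum `Spec R \ {m}` is connected. -/
theorem stmt_16 (R : Type*) [CommRing R] [IsNoetherianRing R] [IsLocalRing R]
    (p : ℕ) [Fact p.Prime] [CharP R p] (hdim : 0 < ringKrullDim R)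
    (hFtor : ∀ (d : ℕ) (x y : Fin d → R),
      (Ideal.span (Set.range x)).radical = IsLocalRing.maximalIdeal R →
      (∀ i j, ∃ t : ℕ, (x i * x j) ^ t * (y i * x j - y j * x i) = 0) →
      ∃ (e : ℕ) (r : R), ∀ i, ∃ t : ℕ,
        x i ^ t * (y i ^ p ^ e - r * x i ^ p ^ e) = 0) :
    (∀ a b : Ideal R, a ⊓ b = ⊥ →
        (a ⊔ b).radical = IsLocalRing.maximalIdeal R →
        a.radical = IsLocalRing.maximalIdeal R ∨
          b.radical = IsLocalRing.maximalIdeal R) ∧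
      ConnectedSpace {q : PrimeSpectrum R //
        q.asIdeal ≠ IsLocalRing.maximalIdeal R} := by
  constructor
  · intro a b h0 hm
    exact key_lemma R p hFtor a b (h0 ▸ bot_le) hm
  · -- the punctured spectrum is nonempty
    have hne : ∃ q : PrimeSpectrum R, q.asIdeal ≠ maximalIdeal R := by
      by_contra h
      push_neg at h
      haveI : Subsingleton (PrimeSpectrum R) :=
        ⟨fun q q' => PrimeSpectrum.ext ((h q).trans (h q').symm)⟩
      have h2 : ringKrullDim R ≤ 0 := Order.krullDim_nonpos_of_subsingleton
      exact absurd hdim (not_lt.mpr h2)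
    obtain ⟨q0, hq0⟩ := hne
    -- preconnectedness
    have hpre : IsPreconnected (Set.univ :
        Set {q : PrimeSpectrum R // q.asIdeal ≠ maximalIdeal R}) := by
      rw [isPreconnected_iff_subset_of_fully_disjoint_closed isClosed_univ]
      intro C D hC hD hcover hdisj
      by_contra hcon
      push_neg at hcon
      obtain ⟨hnC, hnD⟩ := hcon
      rw [Set.not_subset] at hnC hnD
      obtain ⟨cD, -, hcD⟩ := hnC
      obtain ⟨cC, -, hcC⟩ := hnD
      have hcDD : cD ∈ D := (hcover (Set.mem_univ cD)).resolve_left hcD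
      have hcCC : cC ∈ C := (hcover (Set.mem_univ cC)).resolve_right hcC
      -- extract ideals
      obtain ⟨ZC, hZC, hZCeq⟩ := isClosed_induced_iff.mp hC
      obtain ⟨ZD, hZD, hZDeq⟩ := isClosed_induced_iff.mp hD
      obtain ⟨I, rfl⟩ := (PrimeSpectrum.isClosed_iff_zeroLocus_ideal ZC).mp hZC
      obtain ⟨J, rfl⟩ := (PrimeSpectrum.isClosed_iff_zeroLocus_ideal ZD).mp hZD
      have hmemC : ∀ q : {q : PrimeSpectrum R // q.asIdeal ≠ maximalIdeal R},
          q ∈ C ↔ I ≤ q.1.asIdeal := by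
        intro q
        rw [← hZCeq]
        exact (PrimeSpectrum.mem_zeroLocus _ _).trans SetLike.coe_subset_coe
      have hmemD : ∀ q : {q : PrimeSpectrum R // q.asIdeal ≠ maximalIdeal R},
          q ∈ D ↔ J ≤ q.1.asIdeal := by
        intro q
        rw [← hZDeq]
        exact (PrimeSpectrum.mem_zeroLocus _ _).trans SetLike.coe_subset_coe
      have hIcC : I ≤ cC.1.asIdeal := (hmemC cC).mp hcCC
      have hJcD : J ≤ cD.1.asIdeal := (hmemD cD).mp hcDD
      -- I ⊓ J is contained in the nilradical
      have hIJ : I ⊓ J ≤ nilradical R := by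
        rw [nilradical_eq_sInf]
        refine le_sInf ?_
        rintro P hP
        haveI := hP
        by_cases hPm : P = maximalIdeal R
        · subst hPm
          exact le_trans (le_trans inf_le_left hIcC) (le_maximalIdeal cC.1.isPrime.ne_top)
        · have hq : (⟨⟨P, hP⟩, hPm⟩ : {q : PrimeSpectrum R // q.asIdeal ≠ maximalIdeal R}) ∈
              C ∪ D := hcover (Set.mem_univ _)
          rcases hq with hq | hq
          · exact le_trans inf_le_left ((hmemC _).mp hq)
          · exact le_trans inf_le_right ((hmemD _).mp hq)
      -- I ⊔ J is m-primary
      have hIJm : (I ⊔ J).radical = maximalIdeal R := by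
        rw [Ideal.radical_eq_sInf]
        have hset : {K : Ideal R | I ⊔ J ≤ K ∧ K.IsPrime} = {maximalIdeal R} := by
          ext K
          simp only [Set.mem_setOf_eq, Set.mem_singleton_iff]
          constructor
          · rintro ⟨hle, hKp⟩
            by_contra hKm
            have hq : (⟨⟨K, hKp⟩, hKm⟩ : {q : PrimeSpectrum R // q.asIdeal ≠ maximalIdeal R}) ∈
                C ∪ D := hcover (Set.mem_univ _)
            have hqC : (⟨⟨K, hKp⟩, hKm⟩ : {q : PrimeSpectrum R // q.asIdeal ≠ maximalIdeal R}) ∈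
                C := (hmemC _).mpr (le_trans le_sup_left hle)
            have hqD : (⟨⟨K, hKp⟩, hKm⟩ : {q : PrimeSpectrum R // q.asIdeal ≠ maximalIdeal R}) ∈
                D := (hmemD _).mpr (le_trans le_sup_right hle)
            exact (Set.disjoint_left.mp hdisj hqC) hqD
          · rintro rfl
            refine ⟨sup_le ?_ ?_, (maximalIdeal.isMaximal R).isPrime⟩
            · exact le_trans hIcC (le_maximalIdeal cC.1.isPrime.ne_top)
            · exact le_trans hJcD (le_maximalIdeal cD.1.isPrime.ne_top)
        rw [hset, sInf_singleton]
      rcases key_lemma R p hFtor I J hIJ hIJm with hrad | hrad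
      · have h3 : I.radical ≤ cC.1.asIdeal :=
          le_trans (Ideal.radical_mono hIcC) (le_of_eq cC.1.isPrime.radical)
        exact cC.2 (le_antisymm (le_maximalIdeal cC.1.isPrime.ne_top) (le_trans hrad.ge h3))
      · have h3 : J.radical ≤ cD.1.asIdeal :=
          le_trans (Ideal.radical_mono hJcD) (le_of_eq cD.1.isPrime.radical)
        exact cD.2 (le_antisymm (le_maximalIdeal cD.1.isPrime.ne_top) (le_trans hrad.ge h3))
    exact { toPreconnectedSpace := ⟨hpre⟩, toNonempty := ⟨⟨q0, hq0⟩⟩ }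
end

section
/- Let (R,m) be a complete Noetherian local domain of dimension 1 with algebraically closed coefficient field K of characteristic p > 0. If η ∈ H^1_m(R) satisfies F(η) = η, then η = 0. Concretely: if y ∈ R, x ∈ m nonzero, and there is r ∈ R with (y/x)^p − (y/x) − r = 0 in R_x, then y/x ∈ R. -/
open Polynomial IsLocalRing

/-- Let `(R, m)` be a complete Noetherian local domain of dimension `1` with an
algebraically closed coefficient field `K` of characteristic `p > 0`.  If
`η ∈ H¹_m(R)` satisfies `F η = η` then `η = 0`.  Concretely (via
`H¹_m(R) ≅ R_x / R`): if `y ∈ R`, `x ∈ m` is nonzero, and there is `r ∈ R` with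
`(y/x)^p − (y/x) − r = 0` in `R_x`, then `y/x` lies in (the image of) `R`. -/
theorem stmt_17 (R : Type*) [CommRing R] [IsNoetherianRing R] [IsLocalRing R]
    [IsDomain R] [IsAdicComplete (IsLocalRing.maximalIdeal R) R]
    (hdim : ringKrullDim R = 1)
    (p : ℕ) [Fact p.Prime] [CharP R p]
    (K : Type*) [Field K] [IsAlgClosed K] [Algebra K R]
    (hcoeff : Function.Bijective ((IsLocalRing.residue R).comp (algebraMap K R)))
    (y x : R) (hx : x ∈ IsLocalRing.maximalIdeal R) (hx0 : x ≠ 0) (r : R)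
    (heq : (IsLocalization.mk' (Localization.Away x) y
          (⟨x, Submonoid.mem_powers x⟩ : Submonoid.powers x)) ^ p -
        IsLocalization.mk' (Localization.Away x) y
          (⟨x, Submonoid.mem_powers x⟩ : Submonoid.powers x) -
        algebraMap R (Localization.Away x) r = 0) :
    ∃ s : R, algebraMap R (Localization.Away x) s =
      IsLocalization.mk' (Localization.Away x) y
        (⟨x, Submonoid.mem_powers x⟩ : Submonoid.powers x) := by
  classical
  have hp1 : 1 < p := (Fact.out : p.Prime).one_lt
  have hp0 : p ≠ 0 := (Fact.out : p.Prime).ne_zero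
  set S := Localization.Away x with hS
  set t : S := IsLocalization.mk' (Localization.Away x) y
      (⟨x, Submonoid.mem_powers x⟩ : Submonoid.powers x) with ht
  set φ : R →+* S := algebraMap R S with hφ
  have hsub : Submonoid.powers x ≤ nonZeroDivisors R :=
    Submonoid.powers_le.mpr (mem_nonZeroDivisors_of_ne_zero hx0)
  haveI : IsDomain S := IsLocalization.isDomain_localization hsub
  have hinj : Function.Injective φ := IsLocalization.injective S hsub
  haveI : CharP S p := charP_of_injective_ringHom hinj p
  -- the residue-field equivalence
  set ψ : K →+* ResidueField R := (IsLocalRing.residue R).comp (algebraMap K R) with hψ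
  let e : K ≃+* ResidueField R := RingEquiv.ofBijective ψ hcoeff
  -- find an approximate root in K
  set c : K := e.symm (IsLocalRing.residue R r) with hc
  obtain ⟨k, hk⟩ : ∃ k : K, (X ^ p - X - C c : K[X]).IsRoot k := by
    apply IsAlgClosed.exists_root
    have h1 : (X + C c : K[X]).degree < (X ^ p : K[X]).degree := by
      rw [degree_X_pow, degree_X_add_C]; exact_mod_cast hp1
    have : (X ^ p - X - C c : K[X]).degree = p := by
      rw [sub_sub, degree_sub_eq_left_of_degree_lt h1, degree_X_pow]
    rw [this]
    exact_mod_cast hp0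
  have hk' : k ^ p - k - c = 0 := by
    simpa [IsRoot, eval_sub, eval_pow] using hk
  -- Hensel lifting of the root
  set f : R[X] := X ^ p - X - C r with hf
  have hmonic : f.Monic := by
    have h1 : (X + C r : R[X]).degree < (X ^ p : R[X]).degree := by
      rw [degree_X_pow, degree_X_add_C]; exact_mod_cast hp1
    rw [hf, sub_sub]
    exact (monic_X_pow p).sub_of_left h1
  set a₀ : R := algebraMap K R k with ha₀
  have heval : f.eval a₀ ∈ maximalIdeal R := by
    have : IsLocalRing.residue R (f.eval a₀) = 0 := by
      have hrc : IsLocalRing.residue R r = ψ c := by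
        exact (e.apply_symm_apply (IsLocalRing.residue R r)).symm
      have : IsLocalRing.residue R (f.eval a₀) = ψ (k ^ p - k - c) := by
        simp [hf, eval_sub, eval_pow, map_sub, map_pow, hrc, hψ, ha₀]
      rw [this, hk', map_zero]
    exact (Ideal.Quotient.eq_zero_iff_mem).mp this
  have hder : IsUnit (Ideal.Quotient.mk (maximalIdeal R) (f.derivative.eval a₀)) := by
    have h1 : f.derivative = -1 := by
      rw [hf]
      simp [derivative_sub, derivative_X_pow, CharP.cast_eq_zero R p]
    rw [h1]
    simp only [eval_neg, eval_one, map_neg, map_one]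
    exact isUnit_one.neg
  obtain ⟨a, haroot, -⟩ := HenselianRing.is_henselian (I := maximalIdeal R) f hmonic a₀ heval hder
  have haroot' : a ^ p - a - r = 0 := by
    simpa [hf, IsRoot, eval_sub, eval_pow] using haroot
  -- the element u = t - φ a satisfies u ^ p = u
  set u : S := t - φ a with hu
  have hu0 : u ^ p - u = 0 := by
    have h2 : (φ a) ^ p - φ a - φ r = 0 := by
      rw [← map_pow, ← map_sub, ← map_sub, haroot', map_zero]
    rw [hu, sub_pow_char]
    linear_combination heq - h2
  -- the finite-field factorization of X^p - X
  have hcard : Fintype.card (ZMod p) = p := ZMod.card p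
  haveI : NeZero p := ⟨hp0⟩
  have hZ : (∏ a : ZMod p, (X - C a) : (ZMod p)[X]) = X ^ p - X := by
    have hne : (X ^ p - X : (ZMod p)[X]).Monic := by
      have h1 : (X : (ZMod p)[X]).degree < (X ^ p : (ZMod p)[X]).degree := by
        rw [degree_X_pow, degree_X]; exact_mod_cast hp1
      exact (monic_X_pow p).sub_of_left h1
    have hroots : (X ^ p - X : (ZMod p)[X]).roots = Finset.univ.val := by
      have := FiniteField.roots_X_pow_card_sub_X (ZMod p)
      rwa [hcard] at this
    have hdeg : (X ^ p - X : (ZMod p)[X]).natDegree = p :=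
      FiniteField.X_pow_card_sub_X_natDegree_eq (ZMod p) hp1
    have := prod_multiset_X_sub_C_of_monic_of_roots_card_eq hne
      (by rw [hroots, hdeg]; simpa using hcard)
    rw [← this, hroots]
    rfl
  set χ : ZMod p →+* S := ZMod.castHom dvd_rfl S with hχ
  have hZ' : (∏ a : ZMod p, (u - χ a)) = u ^ p - u := by
    have := congrArg (fun q : (ZMod p)[X] => Polynomial.eval₂ χ u q) hZ
    simpa [eval₂_finset_prod, eval₂_sub, eval₂_pow, eval₂_X, eval₂_C] using this
  have hprod0 : (∏ a : ZMod p, (u - χ a)) = 0 := by rw [hZ', hu0]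
  obtain ⟨b, -, hb⟩ := Finset.prod_eq_zero_iff.mp hprod0
  have hub : u = χ b := sub_eq_zero.mp hb
  refine ⟨a + (b.val : R), ?_⟩
  have hbv : ((b.val : ℕ) : ZMod p) = b := ZMod.natCast_rightInverse b
  have hχb : χ b = ((b.val : ℕ) : S) := by rw [← map_natCast χ b.val, hbv]
  have : φ (a + (b.val : R)) = φ a + ((b.val : ℕ) : S) := by
    rw [map_add, map_natCast]
  rw [this, ← hχb, ← hub, hu]
  ring
end
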